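/- Let Z > 1 and α ∈ (-1,1), and define f(y) := (1+α) log y + (1-α) log(1-y) - (1+α) log(Z-y) for y ∈ (0,1). Then the point y₀ := Z(1+α)/(Z + √(Z² - Z(1-α²))) lies in the open interval (0,1), satisfies f'(y₀) = 0, and is the unique zero of f' in (0,1). -/

import Mathlib

set_option maxHeartbeats 800000

open Real Set

lemma deriv_aux (Z α y : ℝ) (hy0 : 0 < y) (hy1 : y < 1) (hZ : 1 < Z) :
    deriv (fun y : ℝ =>
        (1 + α) * Real.log y + (1 - α) * Real.log (1 - y) - (1 + α) * Real.log (Z - y)) y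
      = (1 + α) / y - (1 - α) / (1 - y) + (1 + α) / (Z - y) := by
  have hy : y ≠ 0 := ne_of_gt hy0
  have h1y : (1 : ℝ) - y ≠ 0 := by linarith
  have hZy : Z - y ≠ 0 := by linarith
  have h1 : HasDerivAt (fun y : ℝ => Real.log y) y⁻¹ y := Real.hasDerivAt_log hy
  have h2 : HasDerivAt (fun y : ℝ => (1 : ℝ) - y) (-1) y := by
    simpa using (hasDerivAt_id y).const_sub 1
  have h3 : HasDerivAt (fun y : ℝ => Real.log (1 - y)) ((1 - y)⁻¹ * (-1)) y :=
    (Real.hasDerivAt_log h1y).comp y h2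
  have h4 : HasDerivAt (fun y : ℝ => Z - y) (-1) y := by
    simpa using (hasDerivAt_id y).const_sub Z
  have h5 : HasDerivAt (fun y : ℝ => Real.log (Z - y)) ((Z - y)⁻¹ * (-1)) y :=
    (Real.hasDerivAt_log hZy).comp y h4
  have H := ((h1.const_mul (1 + α)).add (h3.const_mul (1 - α))).sub (h5.const_mul (1 + α))
  have H' : deriv (fun y : ℝ =>
        (1 + α) * Real.log y + (1 - α) * Real.log (1 - y) - (1 + α) * Real.log (Z - y)) y = _ := H.deriv
  rw [H']
  field_simp
  ring

theorem stmt_5 (Z α : ℝ) (hZ : 1 < Z) (hα : α ∈ Set.Ioo (-1 : ℝ) 1) :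
    Z * (1 + α) / (Z + Real.sqrt (Z ^ 2 - Z * (1 - α ^ 2))) ∈ Set.Ioo (0 : ℝ) 1 ∧
    deriv (fun y : ℝ =>
        (1 + α) * Real.log y + (1 - α) * Real.log (1 - y) - (1 + α) * Real.log (Z - y))
      (Z * (1 + α) / (Z + Real.sqrt (Z ^ 2 - Z * (1 - α ^ 2)))) = 0 ∧
    ∀ y ∈ Set.Ioo (0 : ℝ) 1,
      deriv (fun y : ℝ =>
          (1 + α) * Real.log y + (1 - α) * Real.log (1 - y) - (1 + α) * Real.log (Z - y))
        y = 0 →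
      y = Z * (1 + α) / (Z + Real.sqrt (Z ^ 2 - Z * (1 - α ^ 2))) := by
  obtain ⟨hα1, hα2⟩ := hα
  have ha1 : 0 < 1 + α := by linarith
  have ha2 : 0 < 1 - α := by linarith
  have hD : 0 < Z ^ 2 - Z * (1 - α ^ 2) := by nlinarith
  set s := Real.sqrt (Z ^ 2 - Z * (1 - α ^ 2)) with hs_def
  have hs2 : s ^ 2 = Z ^ 2 - Z * (1 - α ^ 2) := Real.sq_sqrt hD.le
  have hs0 : 0 < s := Real.sqrt_pos.mpr hD
  clear_value s
  have hZs : 0 < Z + s := by linarith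
  set y₀ := Z * (1 + α) / (Z + s) with hy₀_def
  clear_value y₀
  have hy₀pos : 0 < y₀ := by
    rw [hy₀_def]
    exact div_pos (by nlinarith) hZs
  have hZ0 : (0:ℝ) < Z := by linarith
  have hZ1 : (0:ℝ) < Z - 1 := by linarith
  have hZαs : Z * α < s := by
    apply lt_of_pow_lt_pow_left₀ 2 hs0.le
    nlinarith [hs2, mul_pos (mul_pos hZ0 hZ1) (mul_pos ha1 ha2)]
  have hy₀lt1 : y₀ < 1 := by
    rw [hy₀_def, div_lt_one hZs]
    nlinarith
  have hg0 : (1 - α) * y₀ ^ 2 - 2 * Z * y₀ + Z * (1 + α) = 0 := by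
    rw [hy₀_def]
    field_simp
    linear_combination (Z * (1 + α)) * hs2
  have key : ∀ y : ℝ, 0 < y → y < 1 →
      (deriv (fun y : ℝ =>
        (1 + α) * Real.log y + (1 - α) * Real.log (1 - y) - (1 + α) * Real.log (Z - y)) y = 0
      ↔ (1 - α) * y ^ 2 - 2 * Z * y + Z * (1 + α) = 0) := by
    intro y hy0 hy1
    rw [deriv_aux Z α y hy0 hy1 hZ]
    have h1y : (0:ℝ) < 1 - y := by linarith
    have hZy : (0:ℝ) < Z - y := by linarith
    constructor
    · intro h
      field_simp at h
      nlinarith [h]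
    · intro h
      field_simp
      nlinarith [h]
  refine ⟨⟨hy₀pos, hy₀lt1⟩, (key y₀ hy₀pos hy₀lt1).mpr hg0, ?_⟩
  intro y hy hdy
  have hgy := (key y hy.1 hy.2).mp hdy
  have hfac : (y - y₀) * ((1 - α) * (y + y₀) - 2 * Z) = 0 := by nlinarith [hgy, hg0]
  have h1αZs : 1 - α < Z + s := by
    rcases le_or_gt (1 - α) Z with h | h
    · linarith
    · have h2 : 1 - α - Z < s := by
        apply lt_of_pow_lt_pow_left₀ 2 hs0.le
        nlinarith [hs2, mul_pos (mul_pos ha2 ha2) hZ1]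
      linarith
  have hy₀s : (1 - α) * y₀ = Z - s := by
    rw [hy₀_def]
    field_simp
    linear_combination hs2
  have hneg : (1 - α) * (y + y₀) - 2 * Z < 0 := by
    nlinarith [hy₀s, h1αZs, mul_lt_mul_of_pos_left hy.2 ha2]
  have := mul_eq_zero.mp hfac
  rcases this with h | h
  · linarith
  · linarith [hneg]
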